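/- Let Γ be a group with a left-invariant word metric d, let Γ_i be a normal subgroup of Γ, and let r > 0 be such that B_Γ(e,2r) ∩ Γ_i = {e}. If {γ_1,…,γ_n} and {γ'_1,…,γ'_n} are subsets of Γ each of diameter at most r, and γ_j γ'_j^{-1} ∈ Γ_i for all j ∈ {1,…,n}, then γ_j γ'_j^{-1} = γ_k γ'_k^{-1} for all j, k ∈ {1,…,n}. -/
import Mathlib

/-- Let `Γ` be a group with a left-invariant metric `d`,
`N` a normal subgroup, and `r > 0` with `B_Γ(e, 2r) ∩ N = {e}`.
If `{γ_1,…,γ_n}` and `{γ'_1,…,γ'_n}` are subsets of `Γ` of diameter at most `r`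
with `γ_j * (γ'_j)⁻¹ ∈ N` for all `j`, then all the elements `γ_j * (γ'_j)⁻¹`
coincide. -/
theorem stmt0 {Γ : Type*} [Group Γ] [MetricSpace Γ]
    (hinv : ∀ g x y : Γ, dist (g * x) (g * y) = dist x y)
    (N : Subgroup Γ) [N.Normal] (r : ℝ) (hr : 0 < r)
    (hball : ∀ g ∈ N, dist (1 : Γ) g ≤ 2 * r → g = 1)
    (n : ℕ) (γ γ' : Fin n → Γ)
    (hdiam : ∀ j k, dist (γ j) (γ k) ≤ r)
    (hdiam' : ∀ j k, dist (γ' j) (γ' k) ≤ r)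
    (hN : ∀ j, γ j * (γ' j)⁻¹ ∈ N) :
    ∀ j k, γ j * (γ' j)⁻¹ = γ k * (γ' k)⁻¹ := by
  intro j k
  -- the element a * b⁻¹ lies in N
  set a := γ j * (γ' j)⁻¹ with ha
  set b := γ k * (γ' k)⁻¹ with hb
  have hab : a * b⁻¹ ∈ N := N.mul_mem (hN j) (N.inv_mem (hN k))
  -- conjugate by (γ j)⁻¹, still in N by normality
  have hc : (γ j)⁻¹ * (a * b⁻¹) * (γ j) ∈ N :=
    Subgroup.Normal.conj_mem' ‹N.Normal› _ hab (γ j)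
  have hcform : (γ j)⁻¹ * (a * b⁻¹) * (γ j)
      = (γ' j)⁻¹ * (γ' k * ((γ k)⁻¹ * γ j)) := by
    simp [ha, hb, mul_assoc]
  have hdist : dist (1 : Γ) ((γ j)⁻¹ * (a * b⁻¹) * (γ j)) ≤ 2 * r := by
    rw [hcform]
    have h1 : dist (1 : Γ) ((γ' j)⁻¹ * (γ' k * ((γ k)⁻¹ * γ j)))
        = dist (γ' j) (γ' k * ((γ k)⁻¹ * γ j)) := by
      have := hinv (γ' j) 1 ((γ' j)⁻¹ * (γ' k * ((γ k)⁻¹ * γ j)))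
      simpa [mul_assoc] using this.symm
    rw [h1]
    calc dist (γ' j) (γ' k * ((γ k)⁻¹ * γ j))
        ≤ dist (γ' j) (γ' k) + dist (γ' k) (γ' k * ((γ k)⁻¹ * γ j)) :=
          dist_triangle _ _ _
      _ ≤ r + r := by
          gcongr
          · exact hdiam' j k
          · have h2 : dist (γ' k) (γ' k * ((γ k)⁻¹ * γ j))
                = dist (γ k) (γ j) := by
              have := hinv (γ' k) 1 ((γ k)⁻¹ * γ j)
              have h3 := hinv (γ k) 1 ((γ k)⁻¹ * γ j)
              simp only [mul_one] at this h3
              rw [this, ← h3]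
              simp [mul_assoc]
            rw [h2]; exact hdiam k j
      _ = 2 * r := by ring
  have := hball _ hc hdist
  have hab1 : a * b⁻¹ = 1 := by
    have h := congrArg (fun x => γ j * x * (γ j)⁻¹) this
    simpa [mul_assoc] using h
  exact mul_inv_eq_one.mp hab1
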